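/- Fix θ > 0. For each δ > 0 let σ(δ) > θ and define the average energy of the measured filter output Ê(δ) = Σ over those k ∈ ℕ₀ with σ(δ)² e^{−(2k+1)δ} > θ² of σ(δ)² e^{−(2k+1)δ}, and the capacity (in nats per transmission) C(δ) = Σ_{k=0}^∞ max(0, (1/2)·ln(σ(δ)² e^{−(2k+1)δ}/θ²)). Assume δ·Ê(δ) stays bounded as δ → 0+. Then C(δ)/coth δ − (1/2)·[ln √(1 + Ê(δ)/((coth δ/2)·θ²))]² → 0 as δ → 0+. -/

import Mathlib

open Real Filter Set
set_option maxHeartbeats 1000000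

private lemma sum_odd (K : ℕ) : ∑ k ∈ Finset.range K, (2*(k:ℝ)+1) = (K:ℝ)^2 := by
  induction K with
  | zero => simp
  | succ n ih => rw [Finset.sum_range_succ, ih]; push_cast; ring

private lemma master (θ δ s : ℝ) (hθ : 0 < θ) (hδ : 0 < δ) (hs : θ < s) :
    ∃ r : ℝ, |r| ≤ δ ∧ 0 ≤ Real.log (s^2/θ^2) + r ∧
      (∑' k : ℕ, max 0 ((1 / 2) *
          Real.log (s ^ 2 * Real.exp (-((2 * (k : ℝ) + 1) * δ)) / θ ^ 2)))
        = ((Real.log (s^2/θ^2))^2 - r^2) / (8*δ) ∧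
      (∑' k : ℕ,
        Set.indicator {k : ℕ | θ ^ 2 < s ^ 2 * Real.exp (-((2 * (k : ℝ) + 1) * δ))}
          (fun k : ℕ => s ^ 2 * Real.exp (-((2 * (k : ℝ) + 1) * δ))) k)
        = θ^2 * (Real.exp (Real.log (s^2/θ^2)) - Real.exp (-r)) / (2 * Real.sinh δ) := by
  have hθ2 : (0:ℝ) < θ^2 := by positivity
  have hs0 : 0 < s := hθ.trans hs
  have hs2 : (0:ℝ) < s^2 := by positivity
  set L : ℝ := Real.log (s^2/θ^2) with hLdef
  have hratio : 1 < s^2/θ^2 := by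
    rw [lt_div_iff₀ hθ2]; nlinarith
  have hL : 0 < L := Real.log_pos hratio
  have heL : Real.exp L = s^2/θ^2 := Real.exp_log (by positivity)
  -- existence of a cut index
  have hex : ∃ k : ℕ, s ^ 2 * Real.exp (-((2 * (k : ℝ) + 1) * δ)) ≤ θ ^ 2 := by
    refine ⟨⌈L/(2*δ)⌉₊, ?_⟩
    have h1 : L ≤ 2 * (⌈L/(2*δ)⌉₊ : ℝ) * δ := by
      have := Nat.le_ceil (L/(2*δ))
      rw [div_le_iff₀ (by positivity)] at this
      linarith [this]
    have h2 : Real.exp (-((2 * (⌈L/(2*δ)⌉₊ : ℝ) + 1) * δ)) ≤ Real.exp (-L) := by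
      rw [Real.exp_le_exp]; nlinarith
    have h3 : s^2 * Real.exp (-L) = θ^2 := by
      rw [Real.exp_neg, heL]; field_simp
    calc s ^ 2 * Real.exp (-((2 * (⌈L/(2*δ)⌉₊:ℝ) + 1) * δ))
        ≤ s^2 * Real.exp (-L) := by nlinarith [Real.exp_pos (-L)]
      _ = θ^2 := h3
  obtain ⟨K, hKspec, hKmin⟩ : ∃ K : ℕ, s ^ 2 * Real.exp (-((2 * (K : ℝ) + 1) * δ)) ≤ θ ^ 2 ∧
      ∀ k : ℕ, k < K → θ ^ 2 < s ^ 2 * Real.exp (-((2 * (k : ℝ) + 1) * δ)) :=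
    ⟨Nat.find hex, Nat.find_spec hex, fun k hk => by
      have := Nat.find_min hex hk; push_neg at this; exact this⟩
  -- L ≤ (2K+1)δ
  have hupper : L ≤ (2*(K:ℝ)+1)*δ := by
    by_contra h
    push_neg at h
    have : Real.exp (-L) < Real.exp (-((2 * (K : ℝ) + 1) * δ)) := by
      rw [Real.exp_lt_exp]; linarith
    have h3 : s^2 * Real.exp (-L) = θ^2 := by
      rw [Real.exp_neg, heL]; field_simp
    nlinarith
  -- if K ≥ 1, (2K-1)δ < L
  set r : ℝ := 2*(K:ℝ)*δ - L with hrdef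
  have hrabs : |r| ≤ δ := by
    rw [abs_le]
    constructor
    · linarith
    · rcases Nat.eq_zero_or_pos K with h0 | h1
      · rw [h0] at hrdef; simp at hrdef; rw [hrdef]; linarith
      · have hk : K - 1 < K := Nat.sub_lt h1 one_pos
        have := hKmin (K-1) hk
        have hcast : ((K - 1 : ℕ) : ℝ) = (K:ℝ) - 1 := Nat.cast_pred h1
        rw [hcast] at this
        have : Real.exp (-((2 * ((K:ℝ) - 1) + 1) * δ)) * s^2 ≤ Real.exp (-((2 * ((K:ℝ)-1) + 1) * δ)) * s^2 := le_refl _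
        have hlt : Real.exp (-L) < Real.exp (-((2 * ((K:ℝ) - 1) + 1) * δ)) := by
          have h3 : s^2 * Real.exp (-L) = θ^2 := by
            rw [Real.exp_neg, heL]; field_simp
          nlinarith [hKmin (K-1) hk, Real.exp_pos (-((2 * ((K:ℝ) - 1) + 1) * δ))]
        rw [Real.exp_lt_exp] at hlt
        nlinarith
  have hLr : 0 ≤ L + r := by
    have : L + r = 2*(K:ℝ)*δ := by rw [hrdef]; ring
    rw [this]; positivity
  refine ⟨r, hrabs, hLr, ?_, ?_⟩
  · -- capacity tsum
    have hzero : ∀ k ∉ Finset.range K,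
        max 0 ((1 / 2) * Real.log (s ^ 2 * Real.exp (-((2 * (k : ℝ) + 1) * δ)) / θ ^ 2)) = 0 := by
      intro k hk
      rw [Finset.mem_range, not_lt] at hk
      have hle : s ^ 2 * Real.exp (-((2 * (k : ℝ) + 1) * δ)) ≤ θ ^ 2 := by
        have hmono : Real.exp (-((2 * (k : ℝ) + 1) * δ)) ≤ Real.exp (-((2 * (K : ℝ) + 1) * δ)) := by
          rw [Real.exp_le_exp]
          have : (K:ℝ) ≤ (k:ℝ) := by exact_mod_cast hk
          nlinarith
        nlinarith
      have harg : s ^ 2 * Real.exp (-((2 * (k : ℝ) + 1) * δ)) / θ ^ 2 ≤ 1 := by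
        rw [div_le_one hθ2]; exact hle
      have := Real.log_nonpos (by positivity) harg
      rw [max_eq_left]; linarith
    rw [tsum_eq_sum hzero]
    have hterm : ∀ k ∈ Finset.range K,
        max 0 ((1 / 2) * Real.log (s ^ 2 * Real.exp (-((2 * (k : ℝ) + 1) * δ)) / θ ^ 2))
          = (1/2) * (L - (2*(k:ℝ)+1)*δ) := by
      intro k hk
      rw [Finset.mem_range] at hk
      have hlog : Real.log (s ^ 2 * Real.exp (-((2 * (k : ℝ) + 1) * δ)) / θ ^ 2)
          = L - (2*(k:ℝ)+1)*δ := by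
        rw [Real.log_div (by positivity) (ne_of_gt hθ2), Real.log_mul (ne_of_gt hs2)
          (Real.exp_ne_zero _), Real.log_exp, hLdef, Real.log_div (ne_of_gt hs2) (ne_of_gt hθ2)]
        ring
      rw [hlog]
      have hpos : 0 < L - (2*(k:ℝ)+1)*δ := by
        have := hKmin k hk
        have h3 : s^2 * Real.exp (-L) = θ^2 := by
          rw [Real.exp_neg, heL]; field_simp
        have : Real.exp (-((2 * (k : ℝ) + 1) * δ)) > Real.exp (-L) := by
          nlinarith [Real.exp_pos (-((2 * (k : ℝ) + 1) * δ))]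
        rw [gt_iff_lt, Real.exp_lt_exp] at this
        linarith
      rw [max_eq_right]; linarith
    rw [Finset.sum_congr rfl hterm]
    have hsum : ∑ k ∈ Finset.range K, (1/2) * (L - (2*(k:ℝ)+1)*δ)
        = (1/2) * ((K:ℝ)*L - (K:ℝ)^2*δ) := by
      have h1 : ∑ k ∈ Finset.range K, (1/2) * (L - (2*(k:ℝ)+1)*δ)
          = ∑ k ∈ Finset.range K, ((1/2)*L - (δ/2)*(2*(k:ℝ)+1)) := by
        apply Finset.sum_congr rfl; intros; ring
      rw [h1, Finset.sum_sub_distrib, Finset.sum_const, ← Finset.mul_sum, sum_odd,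
        Finset.card_range, nsmul_eq_mul]
      ring
    rw [hsum, eq_div_iff (by positivity : (8*δ) ≠ 0)]
    have hK2 : 2*(K:ℝ)*δ = L + r := by rw [hrdef]; ring
    linear_combination (-(2*(K:ℝ)*δ - L + r)) * hK2
  · -- energy tsum
    have hq1 : Real.exp (-(2*δ)) ≠ 1 := ne_of_lt (by rw [Real.exp_lt_one_iff]; linarith)
    have hzero : ∀ k ∉ Finset.range K,
        Set.indicator {k : ℕ | θ ^ 2 < s ^ 2 * Real.exp (-((2 * (k : ℝ) + 1) * δ))}
          (fun k : ℕ => s ^ 2 * Real.exp (-((2 * (k : ℝ) + 1) * δ))) k = 0 := by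
      intro k hk
      rw [Finset.mem_range, not_lt] at hk
      apply Set.indicator_of_notMem
      simp only [Set.mem_setOf_eq, not_lt]
      have hmono : Real.exp (-((2 * (k : ℝ) + 1) * δ)) ≤ Real.exp (-((2 * (K : ℝ) + 1) * δ)) := by
        rw [Real.exp_le_exp]
        have : (K:ℝ) ≤ (k:ℝ) := by exact_mod_cast hk
        nlinarith
      nlinarith
    rw [tsum_eq_sum hzero]
    have hterm : ∀ k ∈ Finset.range K,
        Set.indicator {k : ℕ | θ ^ 2 < s ^ 2 * Real.exp (-((2 * (k : ℝ) + 1) * δ))}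
          (fun k : ℕ => s ^ 2 * Real.exp (-((2 * (k : ℝ) + 1) * δ))) k
        = s^2 * Real.exp (-δ) * (Real.exp (-(2*δ)))^k := by
      intro k hk
      rw [Finset.mem_range] at hk
      have hmem : k ∈ {k : ℕ | θ ^ 2 < s ^ 2 * Real.exp (-((2 * (k : ℝ) + 1) * δ))} :=
        hKmin k hk
      rw [Set.indicator_of_mem hmem]
      rw [← Real.exp_nat_mul, mul_assoc, ← Real.exp_add]
      congr 1; ring
    have hqK : (Real.exp (-(2*δ)))^K = Real.exp (-(L+r)) := by
      rw [← Real.exp_nat_mul]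
      congr 1
      rw [hrdef]; ring
    rw [Finset.sum_congr rfl hterm, ← Finset.mul_sum, geom_sum_eq hq1, hqK]
    have hs2e : s^2 = θ^2 * Real.exp L := by rw [heL]; field_simp
    have hsinh : 0 < Real.sinh δ := Real.sinh_pos_iff.mpr hδ
    have hne : Real.exp (-(2*δ)) - 1 ≠ 0 := sub_ne_zero.mpr hq1
    rw [← mul_div_assoc, div_eq_div_iff hne (ne_of_gt (by linarith : (0:ℝ) < 2*Real.sinh δ))]
    rw [Real.sinh_eq, hs2e]
    rw [neg_add, Real.exp_add, Real.exp_neg L]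
    have h2 : Real.exp (-(2*δ)) = Real.exp (-δ) * Real.exp (-δ) := by
      rw [← Real.exp_add]; congr 1; ring
    rw [h2, Real.exp_neg δ]
    have he1 : Real.exp L ≠ 0 := Real.exp_ne_zero L
    have he2 : Real.exp δ ≠ 0 := Real.exp_ne_zero δ
    field_simp
    ring

private lemma perdelta (θ δ s Eh Cv M₀ : ℝ) (hθ : 0 < θ) (hδ : 0 < δ) (hδ8 : δ ≤ 1/8)
    (hs : θ < s) (hM0 : 0 ≤ M₀) (hM : δ * Eh ≤ M₀)
    (hEv : Eh = ∑' k : ℕ,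
        Set.indicator {k : ℕ | θ ^ 2 < s ^ 2 * Real.exp (-((2 * (k : ℝ) + 1) * δ))}
          (fun k : ℕ => s ^ 2 * Real.exp (-((2 * (k : ℝ) + 1) * δ))) k)
    (hCv : Cv = ∑' k : ℕ, max 0 ((1 / 2) *
        Real.log (s ^ 2 * Real.exp (-((2 * (k : ℝ) + 1) * δ)) / θ ^ 2))) :
    |Cv / (Real.cosh δ / Real.sinh δ) -
        (1 / 2) * (Real.log (Real.sqrt (1 + Eh / ((Real.cosh δ / Real.sinh δ / 2) * θ ^ 2)))) ^ 2|
      ≤ (Real.log (2 + 4*M₀/θ^2)^2 + 1)/8 * |Real.sinh δ/(δ*Real.cosh δ) - 1|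
        + δ^2/8 + 6*δ*(6*δ + 2*Real.log (2 + 4*M₀/θ^2))/8 := by
  obtain ⟨r, hrabs, hLr, hCsum, hEsum⟩ := master θ δ s hθ hδ hs
  have hθ2 : (0:ℝ) < θ^2 := by positivity
  have hs0 : 0 < s := hθ.trans hs
  set L : ℝ := Real.log (s^2/θ^2) with hLdef
  set B : ℝ := Real.log (2 + 4*M₀/θ^2) with hBdef
  have hratio : 1 < s^2/θ^2 := by rw [lt_div_iff₀ hθ2]; nlinarith
  have hL : 0 < L := Real.log_pos hratio
  obtain ⟨hrlo, hrhi⟩ := abs_le.mp hrabs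
  -- basic exp bounds
  have h12 : Real.exp (1/2:ℝ) ≤ 2 := by
    have h1 : Real.exp (1/2:ℝ) * Real.exp (1/2:ℝ) = Real.exp 1 := by
      rw [← Real.exp_add]; norm_num
    have h2 : Real.exp 1 < 2.7182818286 := Real.exp_one_lt_d9
    nlinarith [Real.exp_pos (1/2:ℝ)]
  have hed : Real.exp δ ≤ 2 := le_trans (Real.exp_le_exp.mpr (by linarith)) h12
  have hednn : (1:ℝ) ≤ Real.exp δ := by
    rw [Real.one_le_exp_iff]; linarith
  have hemd : Real.exp (-δ) ≤ 1 := Real.exp_le_one_iff.mpr (by linarith)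
  have hemd1 : 1 - δ ≤ Real.exp (-δ) := by nlinarith [Real.add_one_le_exp (-δ)]
  have hedm1 : Real.exp δ - 1 ≤ 2*δ := by
    have hinv : Real.exp δ * Real.exp (-δ) = 1 := by
      rw [← Real.exp_add]; simp
    nlinarith
  have hemr2 : Real.exp (-r) ≤ 2 := le_trans (Real.exp_le_exp.mpr (by linarith)) hed
  have hemr12 : Real.exp (-r) ≤ 1 + 2*δ := by
    have := Real.exp_le_exp.mpr (show -r ≤ δ by linarith)
    linarith
  have hemr1 : 1 - δ ≤ Real.exp (-r) := by
    have := Real.exp_le_exp.mpr (show -δ ≤ -r by linarith)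
    linarith
  have hemr0 : 0 < Real.exp (-r) := Real.exp_pos _
  have hcosh : Real.cosh δ = (Real.exp δ + Real.exp (-δ))/2 := Real.cosh_eq δ
  have hsinh : Real.sinh δ = (Real.exp δ - Real.exp (-δ))/2 := Real.sinh_eq δ
  have hsinhpos : 0 < Real.sinh δ := Real.sinh_pos_iff.mpr hδ
  have hcosh1 : 1 ≤ Real.cosh δ := by
    have hinv : Real.exp δ * Real.exp (-δ) = 1 := by rw [← Real.exp_add]; simp
    nlinarith [Real.exp_pos δ]
  have hcosh2 : Real.cosh δ ≤ 2 := by rw [hcosh]; linarith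
  have hcoshm1 : Real.cosh δ - 1 ≤ δ := by rw [hcosh]; linarith
  have hsinh2 : Real.sinh δ ≤ 2*δ := by rw [hsinh]; linarith
  have heL : Real.exp L = s^2/θ^2 := Real.exp_log (by positivity)
  have hEhval : Eh = θ^2 * (Real.exp L - Real.exp (-r)) / (2*Real.sinh δ) := by
    rw [hEv, hEsum]
  have hELr : Real.exp (-r) ≤ Real.exp L := Real.exp_le_exp.mpr (by linarith)
  -- bound L ≤ B
  have hEq : Eh * (2*Real.sinh δ) = θ^2 * (Real.exp L - Real.exp (-r)) := by
    rw [hEhval]; field_simp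
  have hA4M : θ^2 * (Real.exp L - Real.exp (-r)) ≤ 4*M₀ := by
    have h1 : δ * (Eh * (2*Real.sinh δ)) ≤ M₀ * (2*Real.sinh δ) := by
      have := mul_le_mul_of_nonneg_right hM (le_of_lt (by linarith : (0:ℝ) < 2*Real.sinh δ))
      linarith [this]
    have h2 : M₀ * (2*Real.sinh δ) ≤ M₀ * (4*δ) := by
      apply mul_le_mul_of_nonneg_left _ hM0; linarith
    have h3 : δ * (θ^2 * (Real.exp L - Real.exp (-r))) ≤ δ * (4*M₀) := by
      calc δ * (θ^2 * (Real.exp L - Real.exp (-r))) = δ * (Eh * (2*Real.sinh δ)) := by rw [hEq]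
        _ ≤ M₀ * (4*δ) := le_trans h1 h2
        _ = δ * (4*M₀) := by ring
    exact le_of_mul_le_mul_left h3 hδ
  have hBge : (0:ℝ) < 2 + 4*M₀/θ^2 := by positivity
  have hLB : L ≤ B := by
    rw [hBdef, Real.le_log_iff_exp_le hBge]
    have : θ^2 * Real.exp L ≤ 4*M₀ + θ^2 * Real.exp (-r) := by linarith
    rw [← sub_nonneg]
    have hrw : 2 + 4*M₀/θ^2 - Real.exp L = (θ^2*2 + 4*M₀ - θ^2*Real.exp L)/θ^2 := by
      field_simp
    rw [hrw]
    apply div_nonneg _ (le_of_lt hθ2)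
    have hp : θ^2 * Real.exp (-r) ≤ θ^2 * 2 :=
      mul_le_mul_of_nonneg_left hemr2 (le_of_lt hθ2)
    linarith only [this, hp]
  have hB0 : 0 < B := lt_of_lt_of_le hL hLB
  -- the x value
  have hx : Eh / ((Real.cosh δ / Real.sinh δ / 2) * θ ^ 2)
      = (Real.exp L - Real.exp (-r))/Real.cosh δ := by
    rw [hEhval]
    have hc0 : Real.cosh δ ≠ 0 := by linarith
    have hs0' : Real.sinh δ ≠ 0 := by linarith
    field_simp
  set x : ℝ := (Real.exp L - Real.exp (-r))/Real.cosh δ with hxdef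
  have hx0 : 0 ≤ x := by
    apply div_nonneg (by linarith) (by linarith)
  have h1x : (1:ℝ) ≤ 1 + x := by linarith
  set y : ℝ := Real.log (1 + x) with hydef
  have hy0 : 0 ≤ y := Real.log_nonneg h1x
  -- u and its bounds
  set u : ℝ := (1 + x) * Real.exp (-L) with hudef
  have hupos : 0 < u := by positivity
  have hyLu : y = L + Real.log u := by
    have h1xu : 1 + x = Real.exp L * u := by
      rw [hudef, mul_comm (1+x) (Real.exp (-L)), ← mul_assoc, ← Real.exp_add]
      simp
    rw [hydef, h1xu, Real.log_mul (Real.exp_ne_zero L) (ne_of_gt hupos), Real.log_exp]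
  have haL : Real.exp (-L) ≤ 1 := Real.exp_le_one_iff.mpr (by linarith)
  have haL0 : 0 < Real.exp (-L) := Real.exp_pos _
  have hb1 : Real.exp (-L) * Real.exp (-r) ≤ 1 := by
    rw [← Real.exp_add]
    apply Real.exp_le_one_iff.mpr; linarith
  have hb0 : 0 < Real.exp (-L) * Real.exp (-r) := by positivity
  have hu : u = Real.exp (-L) + (1 - Real.exp (-L) * Real.exp (-r))/Real.cosh δ := by
    have heLr : Real.exp L * Real.exp (-L) = 1 := by rw [← Real.exp_add]; simp
    have hxl : x * Real.exp (-L) = (1 - Real.exp (-L) * Real.exp (-r))/Real.cosh δ := by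
      rw [hxdef, div_mul_eq_mul_div]
      congr 1
      linear_combination heLr
    rw [hudef, add_mul, one_mul, hxl]
  set d : ℝ := (1 - Real.exp (-L) * Real.exp (-r))/Real.cosh δ with hddef
  have hdc : d * Real.cosh δ = 1 - Real.exp (-L) * Real.exp (-r) := by
    rw [hddef]; field_simp
  have hd0 : 0 ≤ d := div_nonneg (by linarith) (by linarith)
  have hdle : d ≤ 1 - Real.exp (-L) * Real.exp (-r) := by
    rw [hddef]; apply div_le_self (by linarith) hcosh1
  have huub : u - 1 ≤ 3*δ := by
    have hp1 : Real.exp (-L) * (1 - δ) ≤ Real.exp (-L) * Real.exp (-r) :=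
      mul_le_mul_of_nonneg_left hemr1 (le_of_lt haL0)
    have hp2 : Real.exp (-L) * δ ≤ 1 * δ :=
      mul_le_mul_of_nonneg_right haL (le_of_lt hδ)
    rw [hu]
    linarith only [hdle, hp1, hp2, hδ]
  have hulb : -(3*δ) ≤ u - 1 := by
    have hd1 : d ≤ 1 := le_trans hdle (by linarith)
    have hdm : d * (Real.cosh δ - 1) ≤ δ := by
      calc d * (Real.cosh δ - 1) ≤ 1 * δ :=
            mul_le_mul hd1 hcoshm1 (by linarith) (by norm_num)
        _ = δ := one_mul δ
    have hdge : 1 - Real.exp (-L)*Real.exp (-r) - δ ≤ d := by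
      linarith only [hdm, hdc]
    have hp3 : Real.exp (-L) * Real.exp (-r) ≤ Real.exp (-L) * (1 + 2*δ) :=
      mul_le_mul_of_nonneg_left hemr12 (le_of_lt haL0)
    have hp2 : Real.exp (-L) * δ ≤ 1 * δ :=
      mul_le_mul_of_nonneg_right haL (le_of_lt hδ)
    rw [hu]
    linarith only [hdge, hp3, hp2, hδ]
  have hu12 : (1/2:ℝ) ≤ u := by linarith
  have hlogu : |Real.log u| ≤ 6*δ := by
    rw [abs_le]
    constructor
    · have hq0 : (1:ℝ) ≤ (1 - 3*δ)*(1 + 6*δ) := by nlinarith only [hδ, hδ8]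
      have hexp6 : Real.exp (-(6*δ)) * (1 + 6*δ) ≤ 1 := by
        have h := Real.add_one_le_exp (6*δ)
        have hi : Real.exp (-(6*δ)) * Real.exp (6*δ) = 1 := by rw [← Real.exp_add]; simp
        nlinarith only [h, hi, Real.exp_pos (-(6*δ))]
      have hexple : Real.exp (-(6*δ)) ≤ u := by
        have h6 : (0:ℝ) < 1 + 6*δ := by linarith
        nlinarith only [hexp6, hq0, h6, hulb]
      have := Real.log_le_log (Real.exp_pos _) hexple
      rw [Real.log_exp] at this
      linarith
    · have := Real.log_le_sub_one_of_pos hupos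
      linarith
  have hyL : |y - L| ≤ 6*δ := by rw [hyLu]; simpa using hlogu
  obtain ⟨hyL1, hyL2⟩ := abs_le.mp hyL
  have hyB : y ≤ B + 6*δ := by linarith
  -- capacity value
  have hCval : Cv = (L^2 - r^2)/(8*δ) := by rw [hCv, hCsum]
  -- final assembly
  set T : ℝ := Real.sinh δ/(δ*Real.cosh δ) with hTdef
  have hCterm : Cv / (Real.cosh δ / Real.sinh δ) = (L^2 - r^2)/8 * T := by
    rw [hCval, hTdef]
    have hc0 : Real.cosh δ ≠ 0 := by linarith
    have hs0' : Real.sinh δ ≠ 0 := by linarith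
    have hδ' : δ ≠ 0 := ne_of_gt hδ
    field_simp
  have hsqrt : (1/2:ℝ) * (Real.log (Real.sqrt (1 + x)))^2 = y^2/8 := by
    rw [Real.log_sqrt (by linarith)]
    rw [hydef]; ring
  rw [hx, hCterm, hsqrt]
  have hsplit : (L^2 - r^2)/8 * T - y^2/8
      = (L^2 - r^2)/8 * (T - 1) + ((L^2 - r^2) - y^2)/8 := by ring
  rw [hsplit]
  have habs1 : |(L^2 - r^2)/8 * (T - 1)| ≤ (B^2 + 1)/8 * |T - 1| := by
    rw [abs_mul]
    apply mul_le_mul_of_nonneg_right _ (abs_nonneg _)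
    rw [abs_le]
    have hL2 : L^2 ≤ B^2 := by nlinarith only [hL, hLB]
    have hr2 : r^2 ≤ 1 := by nlinarith only [hrlo, hrhi, hδ, hδ8]
    constructor <;>
      [linarith only [hL2, hr2, sq_nonneg L, sq_nonneg r, sq_nonneg B];
       linarith only [hL2, hr2, sq_nonneg L, sq_nonneg r, sq_nonneg B]]
  have habs2 : |((L^2 - r^2) - y^2)/8| ≤ δ^2/8 + 6*δ*(6*δ + 2*B)/8 := by
    rw [abs_le]
    have hy2 : |L^2 - y^2| ≤ 6*δ*(2*B + 6*δ) := by
      have hfac : L^2 - y^2 = (L - y)*(L + y) := by ring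
      rw [hfac, abs_le]
      have hq1 : 0 ≤ L + y := by linarith
      have hq2 : L + y ≤ 2*B + 6*δ := by linarith
      have hup1 : (L - y)*(L + y) ≤ 6*δ*(L + y) :=
        mul_le_mul_of_nonneg_right (by linarith) hq1
      have hup2 : 6*δ*(L + y) ≤ 6*δ*(2*B + 6*δ) :=
        mul_le_mul_of_nonneg_left hq2 (by linarith)
      have hlo1 : (-(6*δ))*(L + y) ≤ (L - y)*(L + y) :=
        mul_le_mul_of_nonneg_right (by linarith) hq1
      have hlo2 : (-(6*δ))*(2*B + 6*δ) ≤ (-(6*δ))*(L + y) :=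
        mul_le_mul_of_nonpos_left hq2 (by linarith)
      constructor <;> [linarith only [hlo1, hlo2]; linarith only [hup1, hup2]]
    obtain ⟨hy21, hy22⟩ := abs_le.mp hy2
    have hrsq : r^2 ≤ δ^2 := by nlinarith only [hrlo, hrhi]
    constructor <;>
      [linarith only [hy21, hy22, hrsq, sq_nonneg r, sq_nonneg δ];
       linarith only [hy21, hy22, hrsq, sq_nonneg r, sq_nonneg δ]]
  calc |(L^2 - r^2)/8 * (T - 1) + ((L^2 - r^2) - y^2)/8|
      ≤ |(L^2 - r^2)/8 * (T - 1)| + |((L^2 - r^2) - y^2)/8| := abs_add_le _ _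
    _ ≤ (B^2 + 1)/8 * |T - 1| + (δ^2/8 + 6*δ*(6*δ + 2*B)/8) := add_le_add habs1 habs2
    _ = (B^2 + 1)/8 * |T - 1| + δ^2/8 + 6*δ*(6*δ + 2*B)/8 := by ring

/-- Theorem 6 of the paper: capacity of the heat channel in terms of the average energy of the
measured filter output. With water level `σ(δ)² > θ²`, measured output energy
`Ê(δ) = Σ_{k : σ(δ)² e^{−(2k+1)δ} > θ²} σ(δ)² e^{−(2k+1)δ}` and capacity (in nats)
`C(δ) = Σ_k ((1/2)·ln(σ(δ)² e^{−(2k+1)δ}/θ²))⁺`; if `δ·Ê(δ)` stays bounded as `δ → 0+`, then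
`C(δ)/coth δ − (1/2)·[ln √(1 + Ê(δ)/((coth δ/2)·θ²))]² → 0` as `δ → 0+`. -/
theorem heat_channel_capacity_second_formula
    (θ : ℝ) (hθ : 0 < θ)
    (σ : ℝ → ℝ) (hσ : ∀ δ > 0, θ < σ δ)
    (Ehat C : ℝ → ℝ)
    (hE : ∀ δ > 0, Ehat δ =
      ∑' k : ℕ,
        Set.indicator {k : ℕ | θ ^ 2 < σ δ ^ 2 * Real.exp (-((2 * (k : ℝ) + 1) * δ))}
          (fun k : ℕ => σ δ ^ 2 * Real.exp (-((2 * (k : ℝ) + 1) * δ))) k)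
    (hC : ∀ δ > 0, C δ =
      ∑' k : ℕ, max 0 ((1 / 2) *
        Real.log (σ δ ^ 2 * Real.exp (-((2 * (k : ℝ) + 1) * δ)) / θ ^ 2)))
    (hbound : ∃ M : ℝ, ∀ᶠ δ in nhdsWithin 0 (Set.Ioi 0), δ * Ehat δ ≤ M) :
    Filter.Tendsto
      (fun δ : ℝ =>
        C δ / (Real.cosh δ / Real.sinh δ) -
          (1 / 2) *
            (Real.log (Real.sqrt (1 + Ehat δ / ((Real.cosh δ / Real.sinh δ / 2) * θ ^ 2)))) ^ 2)
      (nhdsWithin 0 (Set.Ioi 0)) (nhds 0) := by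
  obtain ⟨M, hM⟩ := hbound
  set M₀ : ℝ := max M 0 with hM₀def
  have hM0 : 0 ≤ M₀ := le_max_right _ _
  set B : ℝ := Real.log (2 + 4*M₀/θ^2) with hBdef
  -- tendsto of T := sinh δ / (δ cosh δ)
  have hT : Tendsto (fun δ : ℝ => Real.sinh δ/(δ*Real.cosh δ))
      (nhdsWithin 0 (Set.Ioi 0)) (nhds 1) := by
    have h1 : Tendsto (fun δ : ℝ => Real.sinh δ/δ) (nhdsWithin 0 (Set.Ioi 0)) (nhds 1) := by
      have hder := hasDerivAt_iff_tendsto_slope.mp (Real.hasDerivAt_sinh 0)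
      rw [Real.cosh_zero] at hder
      have hsub : Set.Ioi (0:ℝ) ⊆ {x : ℝ | x ≠ 0} := fun x hx => ne_of_gt hx
      have h2 := hder.mono_left (nhdsWithin_mono 0 hsub)
      apply h2.congr'
      filter_upwards [self_mem_nhdsWithin] with δ hδ'
      rw [slope_def_field, Real.sinh_zero]
      ring
    have hcoshT : Tendsto (fun δ : ℝ => Real.cosh δ) (nhdsWithin 0 (Set.Ioi 0)) (nhds 1) := by
      have := (Real.continuous_cosh.tendsto 0).mono_left (nhdsWithin_le_nhds
        (s := Set.Ioi (0:ℝ)))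
      simpa using this
    have h3 := h1.div hcoshT one_ne_zero
    have heq : (fun δ : ℝ => Real.sinh δ/(δ*Real.cosh δ))
        = fun δ : ℝ => (Real.sinh δ/δ)/Real.cosh δ := by
      funext δ; rw [div_div]
    rw [heq]
    have h3' : Tendsto (fun δ : ℝ => (Real.sinh δ/δ)/Real.cosh δ) (nhdsWithin 0 (Set.Ioi 0)) (nhds ((1:ℝ)/1)) := h3
    simpa using h3'
  have habs : Tendsto (fun δ : ℝ => |Real.sinh δ/(δ*Real.cosh δ) - 1|)
      (nhdsWithin 0 (Set.Ioi 0)) (nhds 0) := by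
    have := (hT.sub (tendsto_const_nhds (x := (1:ℝ)))).abs
    simpa using this
  have h1 : Tendsto (fun δ : ℝ => (B^2 + 1)/8 * |Real.sinh δ/(δ*Real.cosh δ) - 1|)
      (nhdsWithin 0 (Set.Ioi 0)) (nhds 0) := by
    have := habs.const_mul ((B^2+1)/8)
    simpa using this
  have h2 : Tendsto (fun δ : ℝ => δ^2/8 + 6*δ*(6*δ + 2*B)/8)
      (nhdsWithin 0 (Set.Ioi 0)) (nhds 0) := by
    have hcont : Continuous (fun δ : ℝ => δ^2/8 + 6*δ*(6*δ + 2*B)/8) := by continuity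
    have := (hcont.tendsto 0).mono_left (nhdsWithin_le_nhds (s := Set.Ioi (0:ℝ)))
    norm_num at this
    exact this
  have hφ : Tendsto (fun δ : ℝ => (B^2 + 1)/8 * |Real.sinh δ/(δ*Real.cosh δ) - 1|
      + (δ^2/8 + 6*δ*(6*δ + 2*B)/8)) (nhdsWithin 0 (Set.Ioi 0)) (nhds 0) := by
    have := h1.add h2
    simpa using this
  apply squeeze_zero_norm' _ hφ
  have hIoo : Set.Ioo (0:ℝ) (1/8) ∈ nhdsWithin 0 (Set.Ioi 0) :=
    Ioo_mem_nhdsGT_of_mem ⟨le_refl 0, by norm_num⟩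
  filter_upwards [hM, hIoo] with δ hMδ hδIoo
  obtain ⟨hδ0, hδ8⟩ := hδIoo
  rw [Real.norm_eq_abs]
  have hper := perdelta θ δ (σ δ) (Ehat δ) (C δ) M₀ hθ hδ0 (le_of_lt hδ8)
    (hσ δ hδ0) hM0 (le_trans hMδ (le_max_left M 0)) (hE δ hδ0) (hC δ hδ0)
  rw [← hBdef] at hper
  calc |C δ / (Real.cosh δ / Real.sinh δ) -
        (1 / 2) * (Real.log (Real.sqrt (1 + Ehat δ / ((Real.cosh δ / Real.sinh δ / 2) * θ ^ 2)))) ^ 2|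
      ≤ (B^2 + 1)/8 * |Real.sinh δ/(δ*Real.cosh δ) - 1| + δ^2/8 + 6*δ*(6*δ + 2*B)/8 := hper
    _ = (B^2 + 1)/8 * |Real.sinh δ/(δ*Real.cosh δ) - 1| + (δ^2/8 + 6*δ*(6*δ + 2*B)/8) := by ring
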